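/- Let (X, 𝓕) be a measurable space, μ a σ-finite measure on it, and 𝓕^fin = {A ∈ 𝓕 : μ(A) < ∞}. Let M : 𝓕^fin → ℂ be finitely additive (M(A ∪ B) = M(A) + M(B) for disjoint A, B ∈ 𝓕^fin) and satisfy M(A) = 0 whenever μ(A) = 0. Then the following are equivalent: (1) there exists h ∈ L²(X, μ; ℂ) such that M(A) = ∫_A h dμ for every A ∈ 𝓕^fin; (2) there exists a constant C < ∞ such that for every N ∈ ℕ and every family A₁,…,A_N of pairwise disjoint sets in 𝓕^fin with μ(A_n) > 0, one has Σ_{n=1}^N |M(A_n)|² / μ(A_n) ≤ C. -/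

import Mathlib

open MeasureTheory ComplexConjugate

attribute [local instance] MeasureTheory.Lp.simpleFunc.module
  MeasureTheory.Lp.simpleFunc.normedSpace MeasureTheory.Lp.simpleFunc.isBoundedSMul

section Helpers

variable {Y : Type*} [MeasurableSpace Y] {ν : Measure Y}

private lemma norm_sq_eq_integral_L2 (f : Lp ℂ 2 ν) : ‖f‖ ^ 2 = ∫ x, ‖f x‖ ^ 2 ∂ν := by
  have h1 : (‖f‖ : ℝ) ^ 2 = RCLike.re (@inner ℂ _ _ f f) := by
    rw [@inner_self_eq_norm_sq ℂ]
  rw [h1, L2.inner_def, ← integral_re (L2.integrable_inner f f)]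
  refine integral_congr_ae (Filter.Eventually.of_forall fun x => ?_)
  simp [RCLike.inner_apply, RCLike.conj_mul, ← Complex.sq_norm,
    ← Complex.ofReal_pow]

private lemma memL2_int_sq {f : Y → ℂ} (hf : MemLp f 2 ν) :
    Integrable (fun x => ‖f x‖ ^ 2) ν := by
  have := hf.integrable_norm_rpow (by norm_num) (by norm_num)
  simpa [ENNReal.toReal_ofNat, Real.rpow_natCast] using this

private lemma sq_setIntegral_le {f : Y → ℂ} (hf : MemLp f 2 ν) {A : Set Y}
    (hA : MeasurableSet A) (hμA : ν A < ⊤) :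
    ‖∫ x in A, f x ∂ν‖ ^ 2 ≤ (ν A).toReal * ∫ x in A, ‖f x‖ ^ 2 ∂ν := by
  haveI : Fact (ν A < ⊤) := ⟨hμA⟩
  have hconj : Real.HolderConjugate 2 2 := by constructor <;> norm_num
  have hfr : MemLp (fun x => ‖f x‖) (ENNReal.ofReal 2) (ν.restrict A) := by
    rw [show ENNReal.ofReal 2 = 2 by norm_num]
    exact (hf.restrict A).norm
  have hgr : MemLp (fun _ : Y => (1 : ℝ)) (ENNReal.ofReal 2) (ν.restrict A) :=
    memLp_const 1
  have hCS := integral_mul_le_Lp_mul_Lq_of_nonneg hconj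
      (Filter.Eventually.of_forall fun x => norm_nonneg (f x))
      (Filter.Eventually.of_forall fun _ => zero_le_one) hfr hgr
  simp only [mul_one, Real.one_rpow] at hCS
  have hint1 : ∫ (_ : Y) in A, (1 : ℝ) ∂ν = (ν A).toReal := by
    simp [setIntegral_const, Measure.restrict_apply, MeasurableSet.univ, Measure.real]
  rw [hint1] at hCS
  have h0 : ‖∫ x in A, f x ∂ν‖ ≤ ∫ x in A, ‖f x‖ ∂ν := norm_integral_le_integral_norm f
  have hI2 : (0:ℝ) ≤ ∫ x in A, ‖f x‖ ^ (2:ℝ) ∂ν :=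
    integral_nonneg fun x => Real.rpow_nonneg (norm_nonneg _) _
  have h2 : ‖∫ x in A, f x ∂ν‖ ^ 2 ≤
      ((∫ x in A, ‖f x‖ ^ (2:ℝ) ∂ν) ^ (1/(2:ℝ)) * (ν A).toReal ^ (1/(2:ℝ))) ^ 2 := by
    apply pow_le_pow_left₀ (norm_nonneg _) (h0.trans hCS)
  refine h2.trans_eq ?_
  rw [mul_pow, ← Real.rpow_natCast (_ ^ (1/(2:ℝ))) 2,
    ← Real.rpow_natCast ((ν A).toReal ^ (1/(2:ℝ))) 2,
    ← Real.rpow_mul hI2, ← Real.rpow_mul ENNReal.toReal_nonneg]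
  norm_num
  ring

end Helpers

set_option maxHeartbeats 1000000 in
set_option synthInstance.maxHeartbeats 1000000 in
/-- Main theorem (case `p = 2`): a finitely additive, absolutely continuous set function
`M` on the sets of finite measure is of the form `M(A) = ∫_A h dμ` with `h ∈ L²(μ)` iff
the sums `∑ |M(Aₙ)|²/μ(Aₙ)` over finite disjoint families are uniformly bounded. -/
theorem stmt2 {X : Type*} [MeasurableSpace X] (μ : Measure X) [SigmaFinite μ]
    (M : Set X → ℂ)
    (hadd : ∀ A B : Set X, MeasurableSet A → MeasurableSet B → μ A < ⊤ → μ B < ⊤ →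
      Disjoint A B → M (A ∪ B) = M A + M B)
    (hac : ∀ A : Set X, MeasurableSet A → μ A = 0 → M A = 0) :
    (∃ h : X → ℂ, MemLp h 2 μ ∧
        ∀ A : Set X, MeasurableSet A → μ A < ⊤ → M A = ∫ x in A, h x ∂μ) ↔
      (∃ C : ℝ, ∀ (N : ℕ) (A : Fin N → Set X),
        (∀ n, MeasurableSet (A n)) → (∀ n, μ (A n) < ⊤) → (∀ n, 0 < μ (A n)) →
        Pairwise (Function.onFun Disjoint A) →
        ∑ n, ‖M (A n)‖ ^ 2 / (μ (A n)).toReal ≤ C) := by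
  constructor
  · rintro ⟨h, hh2, hrep⟩
    refine ⟨∫ x, ‖h x‖ ^ 2 ∂μ, fun N A hmeas hfin hpos hdisj => ?_⟩
    have hint : Integrable (fun x => ‖h x‖ ^ 2) μ := memL2_int_sq hh2
    have step1 : ∀ n, ‖M (A n)‖ ^ 2 / (μ (A n)).toReal ≤ ∫ x in A n, ‖h x‖ ^ 2 ∂μ := by
      intro n
      have ht : 0 < (μ (A n)).toReal :=
        ENNReal.toReal_pos (hpos n).ne' (hfin n).ne
      rw [div_le_iff₀ ht, hrep (A n) (hmeas n) (hfin n)]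
      have := sq_setIntegral_le hh2 (hmeas n) (hfin n)
      linarith [this]
    calc ∑ n, ‖M (A n)‖ ^ 2 / (μ (A n)).toReal
        ≤ ∑ n, ∫ x in A n, ‖h x‖ ^ 2 ∂μ := Finset.sum_le_sum fun n _ => step1 n
      _ = ∫ x in ⋃ n ∈ Finset.univ, A n, ‖h x‖ ^ 2 ∂μ := by
          refine (integral_biUnion_finset Finset.univ (fun i _ => hmeas i)
            (fun i _ j _ hij => hdisj hij) (fun i _ => hint.integrableOn)).symm
      _ ≤ ∫ x, ‖h x‖ ^ 2 ∂μ :=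
          setIntegral_le_integral hint (Filter.Eventually.of_forall fun x => sq_nonneg _)
  · rintro ⟨C, hC⟩
    classical
    haveI : Fact ((1:ENNReal) ≤ 2) := ⟨one_le_two⟩
    set C' := max C 0 with hC'def
    have hC'0 : 0 ≤ C' := le_max_right _ _
    have hC' : ∀ (N : ℕ) (A : Fin N → Set X),
        (∀ n, MeasurableSet (A n)) → (∀ n, μ (A n) < ⊤) → (∀ n, 0 < μ (A n)) →
        Pairwise (Function.onFun Disjoint A) →
        ∑ n, ‖M (A n)‖ ^ 2 / (μ (A n)).toReal ≤ C' :=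
      fun N A h1 h2 h3 h4 => (hC N A h1 h2 h3 h4).trans (le_max_left _ _)
    have hM0 : M ∅ = 0 := by
      have := hadd ∅ ∅ MeasurableSet.empty MeasurableSet.empty (by simp) (by simp)
        (disjoint_bot_left)
      simp only [Set.union_empty] at this
      exact (left_eq_add.mp this)
    -- pointwise bound
    have hb : ∀ A : Set X, MeasurableSet A → μ A < ⊤ → ‖M A‖ ^ 2 ≤ C' * (μ A).toReal := by
      intro A hA hμA
      rcases eq_or_ne (μ A) 0 with h0 | h0
      · simp [hac A hA h0, h0]
      · have hpos : 0 < μ A := pos_iff_ne_zero.mpr h0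
        have h1 := hC' 1 (fun _ => A) (fun _ => hA) (fun _ => hμA) (fun _ => hpos)
          (fun i j hij => absurd (Subsingleton.elim i j) hij)
        rw [Fin.sum_univ_one] at h1
        have ht : 0 < (μ A).toReal := ENNReal.toReal_pos h0 hμA.ne
        rw [div_le_iff₀ ht] at h1
        linarith
    -- the set function as CLMs
    set T : Set X → ℂ →L[ℝ] ℂ :=
      fun A => M A • ((ContinuousLinearMap.id ℂ ℂ).restrictScalars ℝ) with hTdef
    have hT_apply : ∀ A x, T A x = M A * x := fun A x => rfl
    have hT_empty : T ∅ = 0 := by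
      ext x
      simp [hT_apply, hM0]
    have h_zero : ∀ s, MeasurableSet s → μ s = 0 → T s = 0 := by
      intro s hs h0
      ext x
      simp [hT_apply, hac s hs h0]
    have h_add : FinMeasAdditive μ T := by
      intro s t hs ht hμs hμt hst
      ext x
      simp only [hT_apply, ContinuousLinearMap.add_apply]
      rw [hadd s t hs ht hμs.lt_top hμt.lt_top hst,
        add_mul]
    have h_smul : ∀ c : ℂ, ∀ s x, T s (c • x) = c • T s x := by
      intro c s x
      simp [hT_apply, smul_eq_mul]
      ring
    -- integrability of Lp simple functions
    have hmem2 : ∀ f : Lp.simpleFunc ℂ 2 μ, MemLp (Lp.simpleFunc.toSimpleFunc f) 2 μ :=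
      fun f => Lp.simpleFunc.memLp f
    have sInt : ∀ f : Lp.simpleFunc ℂ 2 μ, Integrable (Lp.simpleFunc.toSimpleFunc f) μ := by
      intro f
      rw [SimpleFunc.integrable_iff]
      exact fun y hy => (SimpleFunc.memLp_iff (by norm_num) (by norm_num)).mp (hmem2 f) y hy
    -- key bound for simple functions
    have key0 : ∀ g : SimpleFunc X ℂ, Integrable g μ →
        ‖SimpleFunc.setToSimpleFunc T g‖ ≤
          Real.sqrt C' * Real.sqrt (∫ x, ‖g x‖ ^ 2 ∂μ) := by
      intro g hgi
      have hg2 : MemLp g 2 μ :=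
        (SimpleFunc.memLp_iff_integrable (by norm_num) (by norm_num)).mpr hgi
      set S : Finset ℂ := g.range.filter (fun c => c ≠ 0 ∧ μ (g ⁻¹' {c}) ≠ 0) with hSdef
      have hSne : ∀ c ∈ S, μ (g ⁻¹' {c}) ≠ 0 := by
        intro c hc; rw [hSdef, Finset.mem_filter] at hc; exact hc.2.2
      have hSfin : ∀ c ∈ S, μ (g ⁻¹' {c}) < ⊤ := by
        intro c hc; rw [hSdef, Finset.mem_filter] at hc
        exact SimpleFunc.measure_preimage_lt_top_of_integrable g hgi hc.2.1
      have hSpos : ∀ c ∈ S, 0 < (μ (g ⁻¹' {c})).toReal :=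
        fun c hc => ENNReal.toReal_pos (hSne c hc) (hSfin c hc).ne
      have h1 : ‖SimpleFunc.setToSimpleFunc T g‖ ≤
          ∑ c ∈ S, ‖M (g ⁻¹' {c})‖ * ‖c‖ := by
        rw [SimpleFunc.setToSimpleFunc]
        calc ‖∑ c ∈ g.range, T (g ⁻¹' {c}) c‖
            ≤ ∑ c ∈ g.range, ‖T (g ⁻¹' {c}) c‖ := norm_sum_le _ _
          _ = ∑ c ∈ g.range, ‖M (g ⁻¹' {c})‖ * ‖c‖ :=
              Finset.sum_congr rfl fun c _ => by rw [hT_apply, norm_mul]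
          _ = ∑ c ∈ S, ‖M (g ⁻¹' {c})‖ * ‖c‖ := by
              refine (Finset.sum_filter_of_ne ?_).symm
              intro c hc hne
              constructor
              · rintro rfl; simp at hne
              · intro h0
                rw [hac _ (g.measurableSet_fiber c) h0] at hne
                simp at hne
      have hCS : (∑ c ∈ S, ‖M (g ⁻¹' {c})‖ * ‖c‖) ^ 2 ≤
          (∑ c ∈ S, ‖M (g ⁻¹' {c})‖ ^ 2 / (μ (g ⁻¹' {c})).toReal) *
            (∑ c ∈ S, ‖c‖ ^ 2 * (μ (g ⁻¹' {c})).toReal) := by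
        have hcs := Finset.sum_mul_sq_le_sq_mul_sq S
          (fun c => ‖M (g ⁻¹' {c})‖ / Real.sqrt (μ (g ⁻¹' {c})).toReal)
          (fun c => ‖c‖ * Real.sqrt (μ (g ⁻¹' {c})).toReal)
        have e1 : ∀ c ∈ S, ‖M (g ⁻¹' {c})‖ / Real.sqrt (μ (g ⁻¹' {c})).toReal *
            (‖c‖ * Real.sqrt (μ (g ⁻¹' {c})).toReal) = ‖M (g ⁻¹' {c})‖ * ‖c‖ := by
          intro c hc
          have := Real.sqrt_pos.mpr (hSpos c hc)
          field_simp
        have e2 : ∀ c ∈ S, (‖M (g ⁻¹' {c})‖ / Real.sqrt (μ (g ⁻¹' {c})).toReal) ^ 2 =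
            ‖M (g ⁻¹' {c})‖ ^ 2 / (μ (g ⁻¹' {c})).toReal := by
          intro c hc
          rw [div_pow, Real.sq_sqrt (hSpos c hc).le]
        have e3 : ∀ c ∈ S, (‖c‖ * Real.sqrt (μ (g ⁻¹' {c})).toReal) ^ 2 =
            ‖c‖ ^ 2 * (μ (g ⁻¹' {c})).toReal := by
          intro c hc
          rw [mul_pow, Real.sq_sqrt (hSpos c hc).le]
        rw [Finset.sum_congr rfl e1, Finset.sum_congr rfl e2, Finset.sum_congr rfl e3] at hcs
        exact hcs
      have h3 : ∑ c ∈ S, ‖M (g ⁻¹' {c})‖ ^ 2 / (μ (g ⁻¹' {c})).toReal ≤ C' := by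
        set e := S.equivFin.symm with hedef
        have hsum : ∑ i : Fin S.card, (‖M (g ⁻¹' {((e i : ℂ))})‖ ^ 2 /
            (μ (g ⁻¹' {((e i : ℂ))})).toReal) =
            ∑ c ∈ S, ‖M (g ⁻¹' {c})‖ ^ 2 / (μ (g ⁻¹' {c})).toReal := by
          rw [← Finset.sum_coe_sort S (fun c => ‖M (g ⁻¹' {(c : ℂ)})‖ ^ 2 /
            (μ (g ⁻¹' {(c : ℂ)})).toReal)]
          exact Fintype.sum_equiv e _ _ (fun i => rfl)
        rw [← hsum]
        refine hC' S.card (fun i => g ⁻¹' {(e i : ℂ)}) (fun i => g.measurableSet_fiber _)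
          (fun i => hSfin _ (e i).2) (fun i => pos_iff_ne_zero.mpr (hSne _ (e i).2)) ?_
        intro i j hij
        have hne : ((e i : ℂ)) ≠ ((e j : ℂ)) := by
          intro hEq
          exact hij (e.injective (Subtype.ext hEq))
        exact (Set.disjoint_singleton.mpr hne).preimage g
      have h4 : ∑ c ∈ S, ‖c‖ ^ 2 * (μ (g ⁻¹' {c})).toReal ≤ ∫ x, ‖g x‖ ^ 2 ∂μ := by
        have hint : Integrable (fun x => ‖g x‖ ^ 2) μ := memL2_int_sq hg2
        have hterm : ∀ c ∈ S, ‖c‖ ^ 2 * (μ (g ⁻¹' {c})).toReal =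
            ∫ x in g ⁻¹' {c}, ‖g x‖ ^ 2 ∂μ := by
          intro c hc
          have hcongr : ∫ x in g ⁻¹' {c}, ‖g x‖ ^ 2 ∂μ =
              ∫ _ in g ⁻¹' {c}, ‖c‖ ^ 2 ∂μ := by
            refine setIntegral_congr_fun (g.measurableSet_fiber c) fun x hx => ?_
            simp only [Set.mem_preimage, Set.mem_singleton_iff] at hx
            simp [hx]
          rw [hcongr, setIntegral_const, smul_eq_mul, mul_comm, Measure.real]
        rw [Finset.sum_congr rfl hterm]
        rw [← integral_biUnion_finset S (fun c _ => g.measurableSet_fiber c) ?_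
          (fun c _ => hint.integrableOn)]
        · exact setIntegral_le_integral hint
            (Filter.Eventually.of_forall fun x => sq_nonneg _)
        · intro a _ b _ hab
          exact (Set.disjoint_singleton.mpr hab).preimage g
      -- combine
      have hab0 : 0 ≤ ∑ c ∈ S, ‖M (g ⁻¹' {c})‖ * ‖c‖ :=
        Finset.sum_nonneg fun c _ => mul_nonneg (norm_nonneg _) (norm_nonneg _)
      have hP0 : 0 ≤ ∑ c ∈ S, ‖M (g ⁻¹' {c})‖ ^ 2 / (μ (g ⁻¹' {c})).toReal :=
        Finset.sum_nonneg fun c _ => div_nonneg (sq_nonneg _) ENNReal.toReal_nonneg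
      have hQ0 : 0 ≤ ∑ c ∈ S, ‖c‖ ^ 2 * (μ (g ⁻¹' {c})).toReal :=
        Finset.sum_nonneg fun c _ => mul_nonneg (sq_nonneg _) ENNReal.toReal_nonneg
      have hI0 : (0:ℝ) ≤ ∫ x, ‖g x‖ ^ 2 ∂μ := integral_nonneg fun x => sq_nonneg _
      calc ‖SimpleFunc.setToSimpleFunc T g‖ ≤ ∑ c ∈ S, ‖M (g ⁻¹' {c})‖ * ‖c‖ := h1
        _ = Real.sqrt ((∑ c ∈ S, ‖M (g ⁻¹' {c})‖ * ‖c‖) ^ 2) := (Real.sqrt_sq hab0).symm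
        _ ≤ Real.sqrt (C' * ∫ x, ‖g x‖ ^ 2 ∂μ) := by
            refine Real.sqrt_le_sqrt (hCS.trans ?_)
            exact mul_le_mul h3 h4 hQ0 hC'0
        _ = Real.sqrt C' * Real.sqrt (∫ x, ‖g x‖ ^ 2 ∂μ) := Real.sqrt_mul hC'0 _
    have key : ∀ f : Lp.simpleFunc ℂ 2 μ,
        ‖SimpleFunc.setToSimpleFunc T (Lp.simpleFunc.toSimpleFunc f)‖ ≤
          Real.sqrt C' * ‖(f : Lp ℂ 2 μ)‖ := by
      intro f
      refine (key0 _ (sInt f)).trans ?_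
      have h1 : ∫ x, ‖(Lp.simpleFunc.toSimpleFunc f) x‖ ^ 2 ∂μ =
          ∫ x, ‖(f : Lp ℂ 2 μ) x‖ ^ 2 ∂μ :=
        integral_congr_ae ((Lp.simpleFunc.toSimpleFunc_eq_toFun f).fun_comp (fun z => ‖z‖ ^ 2))
      rw [h1, ← norm_sq_eq_integral_L2, Real.sqrt_sq (norm_nonneg _)]
    let Λ₀ : Lp.simpleFunc ℂ 2 μ →L[ℂ] ℂ :=
      LinearMap.mkContinuous
        { toFun := fun f => SimpleFunc.setToSimpleFunc T (Lp.simpleFunc.toSimpleFunc f)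
          map_add' := fun f g => by
            rw [← SimpleFunc.setToSimpleFunc_add T h_add (sInt f) (sInt g)]
            exact SimpleFunc.setToSimpleFunc_congr T h_zero h_add (sInt (f + g))
              (Lp.simpleFunc.add_toSimpleFunc f g)
          map_smul' := fun c f => by
            simp only [RingHom.id_apply]
            show SimpleFunc.setToSimpleFunc T (Lp.simpleFunc.toSimpleFunc (c • f)) =
              c • SimpleFunc.setToSimpleFunc T (Lp.simpleFunc.toSimpleFunc f)
            rw [← SimpleFunc.setToSimpleFunc_smul T h_add h_smul c (sInt f)]
            exact SimpleFunc.setToSimpleFunc_congr T h_zero h_add (sInt (c • f))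
              (Lp.simpleFunc.smul_toSimpleFunc c f) }
        (Real.sqrt C') key
    have hΛ₀_apply : ∀ f, Λ₀ f = SimpleFunc.setToSimpleFunc T (Lp.simpleFunc.toSimpleFunc f) :=
      fun f => rfl
    let Λ : Lp ℂ 2 μ →L[ℂ] ℂ :=
      Λ₀.extend (Lp.simpleFunc.coeToLp X ℂ ℂ)
    let g0 : Lp ℂ 2 μ := (InnerProductSpace.toDual ℂ (Lp ℂ 2 μ)).symm Λ
    refine ⟨fun x => conj (g0 x), ?_, ?_⟩
    · refine ⟨RCLike.continuous_conj.comp_aestronglyMeasurable (Lp.aestronglyMeasurable g0), ?_⟩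
      have heq : eLpNorm (fun x => conj ((g0 : X → ℂ) x)) 2 μ = eLpNorm (g0 : X → ℂ) 2 μ := by
        rw [← eLpNorm_norm]
        simp_rw [RCLike.norm_conj]
        rw [eLpNorm_norm]
      rw [heq]
      exact Lp.eLpNorm_lt_top g0
    · intro A hA hμA
      have e1 : Λ₀ (Lp.simpleFunc.indicatorConst 2 hA hμA.ne (1:ℂ)) = M A := by
        rw [hΛ₀_apply,
          SimpleFunc.setToSimpleFunc_congr T h_zero h_add (sInt _)
            (Lp.simpleFunc.toSimpleFunc_indicatorConst hA hμA.ne (1:ℂ)),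
          SimpleFunc.setToSimpleFunc_indicator T hT_empty hA, hT_apply, mul_one]
      have e2 : Λ (indicatorConstLp 2 hA hμA.ne (1:ℂ)) = M A := by
        rw [← Lp.simpleFunc.coe_indicatorConst (p := 2) hA hμA.ne (1:ℂ), ← e1]
        exact ContinuousLinearMap.extend_eq (e := Lp.simpleFunc.coeToLp X ℂ ℂ) Λ₀
          (Lp.simpleFunc.denseRange (by norm_num)) Lp.simpleFunc.isUniformInducing
          (Lp.simpleFunc.indicatorConst 2 hA hμA.ne (1:ℂ))
      have e3 : (inner ℂ g0 (indicatorConstLp 2 hA hμA.ne (1:ℂ)) : ℂ) = M A := by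
        rw [← e2]
        exact InnerProductSpace.toDual_symm_apply
      rw [← e3, ← inner_conj_symm, L2.inner_indicatorConstLp_one hA hμA.ne g0, ← integral_conj]
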